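/- For every d ≥ 1, the tensor W_d = Σ_{j=0}^{d-1} e₁^{⊗(d-j-1)} ⊗ e₂ ⊗ e₁^{⊗j} ∈ (ℂ²)^{⊗d} has tensor rank equal to d. -/

import Mathlib

/-- The rank of a multi-mode tensor over `ℂ`. -/
noncomputable def tensorRank {ι : Type*} [Fintype ι] {n : ι → ℕ}
    (T : ((i : ι) → Fin (n i)) → ℂ) : ℕ :=
  sInf {r : ℕ | ∃ x : Fin r → (i : ι) → Fin (n i) → ℂ,
    T = fun idx => ∑ k, ∏ i, x k i (idx i)}

/-- The `W_d` state in `(ℂ²)^{⊗d}`: the entry at a multi-index is `1` exactly when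
precisely one coordinate equals `1` (i.e. `e₂`), and `0` otherwise. -/
def Wd (d : ℕ) : ((_ : Fin d) → Fin 2) → ℂ :=
  fun idx => if (Finset.univ.filter fun j => idx j = 1).card = 1 then 1 else 0

/-- The tensor `e₁^{⊗d}`, entrywise. -/
def Ed (d : ℕ) : ((_ : Fin d) → Fin 2) → ℂ :=
  fun idx => if (Finset.univ.filter fun j => idx j = 1).card = 0 then 1 else 0

lemma card_ones_succ {m : ℕ} (idx : Fin (m + 1) → Fin 2) :
    (Finset.univ.filter fun j => idx j = 1).card
      = (if idx 0 = 1 then 1 else 0)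
        + (Finset.univ.filter fun j : Fin m => idx j.succ = 1).card := by
  rw [Finset.card_filter, Finset.card_filter, Fin.sum_univ_succ]

lemma Wd_cons_zero {m : ℕ} (t : Fin m → Fin 2) :
    Wd (m + 1) (Fin.cons 0 t) = Wd m t := by
  simp [Wd, card_ones_succ]

lemma Wd_cons_one {m : ℕ} (t : Fin m → Fin 2) :
    Wd (m + 1) (Fin.cons 1 t) = Ed m t := by
  simp [Wd, Ed, card_ones_succ]

lemma Ed_cons_zero {m : ℕ} (t : Fin m → Fin 2) :
    Ed (m + 1) (Fin.cons 0 t) = Ed m t := by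
  simp [Ed, card_ones_succ]

lemma Ed_cons_one {m : ℕ} (t : Fin m → Fin 2) :
    Ed (m + 1) (Fin.cons 1 t) = 0 := by
  simp [Ed, card_ones_succ]

/-- Lower bound (substitution method): any decomposition of `W_{m+1} + c e₁^{⊗(m+1)}`
uses at least `m + 1` summands. -/
lemma wd_lower (m : ℕ) :
    ∀ (c : ℂ) (κ : Type) [Fintype κ] [DecidableEq κ]
      (x : κ → Fin (m + 1) → Fin 2 → ℂ),
      (∀ idx, Wd (m + 1) idx + c * Ed (m + 1) idx = ∑ k, ∏ i, x k i (idx i)) →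
      m + 1 ≤ Fintype.card κ := by
  induction m with
  | zero =>
    intro c κ _ _ x h
    rcases isEmpty_or_nonempty κ with hκ | hκ
    · exfalso
      have h1 := h (fun _ => (1 : Fin 2))
      simp [Wd, Ed, Finset.univ_eq_empty] at h1
    · exact Fintype.card_pos
  | succ m ih =>
    intro c κ _ _ x h
    -- the "B" slice is nonzero
    have hB0 : (1 : ℂ) = ∑ k, x k 0 1 * ∏ i : Fin (m + 1), x k i.succ 0 := by
      have h1 := h (Fin.cons 1 (fun _ => 0))
      rw [Wd_cons_one, Ed_cons_one] at h1
      simpa [Ed, Fin.prod_univ_succ] using h1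
    obtain ⟨k₀, hk₀⟩ : ∃ k, x k 0 1 ≠ 0 := by
      by_contra hall
      push_neg at hall
      have : (1 : ℂ) = 0 := by
        rw [hB0]; exact Finset.sum_eq_zero fun k _ => by rw [hall k, zero_mul]
      exact one_ne_zero this
    set α := x k₀ 0 0 with hα
    set β := x k₀ 0 1 with hβ
    set cf : κ → ℂ := fun k => x k 0 0 - α / β * x k 0 1 with hcf
    have hcf0 : cf k₀ = 0 := by
      simp only [hcf, ← hα, ← hβ]
      field_simp
      ring
    -- the reduced decomposition
    set y : {k : κ // k ≠ k₀} → Fin (m + 1) → Fin 2 → ℂ :=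
      fun k i a => (if i = 0 then cf k.1 else 1) * x k.1 i.succ a with hy
    have key : ∀ t : Fin (m + 1) → Fin 2,
        Wd (m + 1) t + (c - α / β) * Ed (m + 1) t = ∑ k, ∏ i, y k i (t i) := by
      intro t
      have hA := h (Fin.cons 0 t)
      rw [Wd_cons_zero, Ed_cons_zero] at hA
      simp only [Fin.prod_univ_succ, Fin.cons_zero, Fin.cons_succ] at hA
      have hBt := h (Fin.cons 1 t)
      rw [Wd_cons_one, Ed_cons_one] at hBt
      simp only [Fin.prod_univ_succ, Fin.cons_zero, Fin.cons_succ, mul_zero, add_zero] at hBt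
      have step1 : ∀ k : {k : κ // k ≠ k₀},
          ∏ i, y k i (t i) = cf k.1 * ∏ i : Fin (m + 1), x k.1 i.succ (t i) := by
        intro k
        rw [hy]
        rw [Finset.prod_mul_distrib]
        congr 1
        rw [Fin.prod_univ_succ]
        simp [Fin.succ_ne_zero]
      simp only [step1]
      have step2 : ∑ k : {k : κ // k ≠ k₀}, cf k.1 * ∏ i : Fin (m + 1), x k.1 i.succ (t i)
          = ∑ k ∈ Finset.univ.erase k₀, cf k * ∏ i : Fin (m + 1), x k i.succ (t i) := by
        exact (Finset.sum_subtype (p := fun k => k ≠ k₀) (Finset.univ.erase k₀)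
          (fun k => by simp [Finset.mem_erase])
          (fun k => cf k * ∏ i : Fin (m + 1), x k i.succ (t i))).symm
      rw [step2, Finset.sum_erase _ (by rw [hcf0, zero_mul])]
      have step3 : ∑ k, cf k * ∏ i : Fin (m + 1), x k i.succ (t i)
          = (∑ k, x k 0 0 * ∏ i : Fin (m + 1), x k i.succ (t i))
            - α / β * ∑ k, x k 0 1 * ∏ i : Fin (m + 1), x k i.succ (t i) := by
        rw [Finset.mul_sum, ← Finset.sum_sub_distrib]
        exact Finset.sum_congr rfl fun k _ => by rw [hcf]; ring
      rw [step3]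
      simp only [Fin.prod_univ_succ]
      rw [← hA, ← hBt]
      ring
    have hcard := ih (c - α / β) {k : κ // k ≠ k₀} y key
    have h1 : Fintype.card {k : κ // k ≠ k₀} = Fintype.card κ - 1 := by
      rw [Fintype.card_subtype_compl, Fintype.card_subtype_eq]
    have h2 : 1 ≤ Fintype.card κ := Fintype.card_pos_iff.mpr ⟨k₀⟩
    omega

/-- Upper bound: an explicit decomposition of `W_d` with `d` summands, via roots of unity. -/
lemma wd_upper (d : ℕ) (hd : 1 ≤ d) :
    ∃ x : Fin d → Fin d → Fin 2 → ℂ,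
      Wd d = fun idx => ∑ k, ∏ i, x k i (idx i) := by
  rcases eq_or_lt_of_le hd with h1 | h2
  · -- d = 1
    subst h1
    refine ⟨fun _ _ a => if a = 1 then 1 else 0, ?_⟩
    funext idx
    simp only [Wd, Finset.card_filter, Fin.sum_univ_one, Fin.prod_univ_one]
    by_cases h : idx 0 = 1 <;> simp [h]
  · -- 2 ≤ d
    have hd0 : (d : ℂ) ≠ 0 := Nat.cast_ne_zero.mpr (by omega)
    set ζ : ℂ := Complex.exp (2 * Real.pi * Complex.I / d) with hζdef
    have hζ : IsPrimitiveRoot ζ d := Complex.isPrimitiveRoot_exp d (by omega)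
    have hζ0 : ζ ≠ 0 := Complex.exp_ne_zero _
    have hζd : ζ ^ d = 1 := hζ.pow_eq_one
    set i₀ : Fin d := ⟨0, by omega⟩ with hi₀
    refine ⟨fun k i a => (if i = i₀ then ζ⁻¹ ^ (k : ℕ) * (d : ℂ)⁻¹ else 1)
      * (if a = 1 then ζ ^ (k : ℕ) else 1), ?_⟩
    funext idx
    set m := (Finset.univ.filter fun j => idx j = 1).card with hm
    have hmd : m ≤ d := by
      rw [hm]
      exact (Finset.card_filter_le _ _).trans_eq (by simp)
    have hprod : ∀ k : Fin d,
        (∏ i, (if i = i₀ then ζ⁻¹ ^ (k : ℕ) * (d : ℂ)⁻¹ else 1)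
          * (if idx i = 1 then ζ ^ (k : ℕ) else 1))
        = (ζ⁻¹ * ζ ^ m) ^ (k : ℕ) * (d : ℂ)⁻¹ := by
      intro k
      rw [Finset.prod_mul_distrib]
      have e1 : (∏ i, if i = i₀ then ζ⁻¹ ^ (k : ℕ) * (d : ℂ)⁻¹ else 1)
          = ζ⁻¹ ^ (k : ℕ) * (d : ℂ)⁻¹ := by
        simp [Finset.prod_ite_eq']
      have e2 : (∏ i, if idx i = 1 then ζ ^ (k : ℕ) else 1) = (ζ ^ (k : ℕ)) ^ m := by
        rw [← Finset.prod_filter, Finset.prod_const, hm]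
      rw [e1, e2, pow_right_comm, mul_pow]
      ring
    simp only [hprod]
    rw [← Finset.sum_mul, Fin.sum_univ_eq_sum_range (fun k => (ζ⁻¹ * ζ ^ m) ^ k)]
    by_cases hm1 : m = 1
    · have : ζ⁻¹ * ζ ^ m = 1 := by rw [hm1, pow_one, inv_mul_cancel₀ hζ0]
      rw [this]
      simp [Wd, ← hm, hm1, hd0]
    · have hμd : (ζ⁻¹ * ζ ^ m) ^ d = 1 := by
        rw [mul_pow, inv_pow, hζd, inv_one, one_mul, pow_right_comm, hζd, one_pow]
      have hμ : ζ⁻¹ * ζ ^ m ≠ 1 := by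
        intro hcontra
        have hzm : ζ ^ m = ζ := by
          have := congrArg (fun z => ζ * z) hcontra
          simpa [← mul_assoc, mul_inv_cancel₀ hζ0] using this
        rcases eq_or_lt_of_le hmd with hmd' | hmd'
        · -- m = d
          rw [hmd', hζd] at hzm
          exact hζ.ne_one (by omega) hzm.symm
        · exact hm1 (hζ.pow_inj hmd' (by omega) (by rw [hzm, pow_one]))
      rw [geom_sum_eq hμ d, hμd, sub_self, zero_div, zero_mul]
      simp [Wd, ← hm, hm1]

/-- For every `d ≥ 1`, the tensor `W_d` has tensor rank `d`. -/
theorem tensorRank_Wd (d : ℕ) (hd : 1 ≤ d) :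
    tensorRank (n := fun _ : Fin d => 2) (Wd d) = d := by
  obtain ⟨x, hx⟩ := wd_upper d hd
  have hmem : d ∈ {r : ℕ | ∃ x : Fin r → (i : Fin d) → Fin 2 → ℂ,
      Wd d = fun idx => ∑ k, ∏ i, x k i (idx i)} := ⟨x, hx⟩
  apply le_antisymm
  · exact Nat.sInf_le hmem
  · apply le_csInf ⟨d, hmem⟩
    rintro r ⟨x', hx'⟩
    obtain ⟨m, rfl⟩ : ∃ m, d = m + 1 := ⟨d - 1, by omega⟩
    have := wd_lower m 0 (Fin r) x'
      (fun idx => by rw [zero_mul, add_zero]; exact congrFun hx' idx)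
    simpa using this
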